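/- Let n be even and a_1,…,a_n reals with a_1 − a_2 + a_3 − ⋯ − a_n = 0. Then there exist positive t_1,…,t_n with a_j = t_j + t_{j+1} (indices mod n) if and only if min over odd k ≤ n−1 of (a_1 − a_2 + ⋯ + a_k) > max over even k ≤ n−2 of (a_1 − a_2 + ⋯ + a_k, including the empty sum 0). -/

import Mathlib

open Fin.NatCast

theorem stmt_6 (n : ℕ) [NeZero n] (hn : Even n) (a : Fin n → ℝ)
    (h0 : ∑ i : Fin n, (-1 : ℝ) ^ (i : ℕ) * a i = 0) :
    (∃ t : Fin n → ℝ, (∀ j, 0 < t j) ∧ ∀ j : Fin n, a j = t j + t (j + 1)) ↔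
      ∀ k l : ℕ, k ≤ n - 1 → Odd k → l ≤ n - 2 → Even l →
        (∑ i ∈ Finset.range l, (-1 : ℝ) ^ i * a (Fin.ofNat n i)) <
          ∑ i ∈ Finset.range k, (-1 : ℝ) ^ i * a (Fin.ofNat n i) := by
  have hn0 : n ≠ 0 := NeZero.ne n
  have hn2 : 2 ≤ n := by rcases hn with ⟨m, rfl⟩; omega
  set S : ℕ → ℝ := fun k => ∑ i ∈ Finset.range k, (-1:ℝ)^i * a (i : Fin n) with hSdef
  have hstep : ∀ k, S (k+1) = S k + (-1:ℝ)^k * a ((k : ℕ) : Fin n) := fun k =>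
    Finset.sum_range_succ _ k
  have hSn : S n = 0 := by
    show ∑ i ∈ Finset.range n, (-1:ℝ)^i * a ((i : ℕ) : Fin n) = 0
    rw [← Fin.sum_univ_eq_sum_range (fun i => (-1:ℝ)^i * a ((i : ℕ) : Fin n)) n]
    simpa [Fin.cast_val_eq_self] using h0
  have hodd : Odd (n - 1) := Nat.Even.sub_odd (by omega) hn odd_one
  constructor
  · rintro ⟨t, ht, hrec⟩
    have key : ∀ k, S k = t 0 - (-1:ℝ)^k * t ((k : ℕ) : Fin n) := by
      intro k
      induction k with
      | zero => simp [hSdef]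
      | succ k ih =>
        rw [hstep, ih, hrec ((k : ℕ) : Fin n)]
        push_cast
        ring
    intro k l hk hok hl hel
    have h1 : S k = t 0 + t ((k : ℕ) : Fin n) := by
      rw [key k, hok.neg_one_pow]; ring
    have h2 : S l = t 0 - t ((l : ℕ) : Fin n) := by
      rw [key l, hel.neg_one_pow]; ring
    show S l < S k
    rw [h1, h2]
    have := ht ((k : ℕ) : Fin n); have := ht ((l : ℕ) : Fin n); linarith
  · intro h
    set E := (Finset.range (n-1)).filter (fun l => Even l) with hE
    set O := (Finset.range n).filter (fun k => Odd k) with hO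
    have hEne : (E.image S).Nonempty :=
      Finset.Nonempty.image ⟨0, by simp [hE, Finset.mem_filter]; omega⟩ S
    have hOne : (O.image S).Nonempty :=
      Finset.Nonempty.image ⟨1, by simp [hO, Finset.mem_filter]; omega⟩ S
    set M := (E.image S).max' hEne with hM
    set m := (O.image S).min' hOne with hm
    have hMm : M < m := by
      obtain ⟨l0, hl0, hl0M⟩ := Finset.mem_image.mp ((E.image S).max'_mem hEne)
      rw [Finset.mem_filter, Finset.mem_range] at hl0
      rw [hM, ← hl0M, hm]
      apply Finset.lt_min'_iff _ _ |>.mpr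
      intro b hb
      obtain ⟨k0, hk0, rfl⟩ := Finset.mem_image.mp hb
      rw [Finset.mem_filter, Finset.mem_range] at hk0
      exact h k0 l0 (by omega) hk0.2 (by omega) hl0.2
    set c := (M + m) / 2 with hc
    have hub : ∀ l, l < n → Even l → S l < c := by
      intro l hl hel
      have hlne : l ≠ n - 1 := by
        rintro rfl; rw [Nat.even_iff] at hel; rw [Nat.odd_iff] at hodd; omega
      have : S l ≤ M :=
        Finset.le_max' _ _ (Finset.mem_image.mpr ⟨l, by
          rw [Finset.mem_filter, Finset.mem_range]; exact ⟨by omega, hel⟩, rfl⟩)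
      linarith
    have hlb : ∀ k, k < n → Odd k → c < S k := by
      intro k hk hok
      have : m ≤ S k :=
        Finset.min'_le _ _ (Finset.mem_image.mpr ⟨k, by
          rw [Finset.mem_filter, Finset.mem_range]; exact ⟨hk, hok⟩, rfl⟩)
      linarith
    refine ⟨fun j => (-1:ℝ)^(j:ℕ) * (c - S (j:ℕ)), ?_, ?_⟩
    · intro j
      show 0 < (-1:ℝ)^(j:ℕ) * (c - S (j:ℕ))
      rcases Nat.even_or_odd (j : ℕ) with hev | hod
      · rw [hev.neg_one_pow, one_mul]
        have := hub (j:ℕ) j.isLt hev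
        linarith
      · rw [hod.neg_one_pow]
        have := hlb (j:ℕ) j.isLt hod
        nlinarith
    · intro j
      have h1n : (1 : ℕ) % n = 1 := Nat.mod_eq_of_lt (by omega)
      by_cases hj : (j : ℕ) + 1 < n
      · have h1 : ((j + 1 : Fin n) : ℕ) = (j : ℕ) + 1 := by
          rw [Fin.add_def]
          simp only [Fin.val_one']
          rw [h1n, Nat.mod_eq_of_lt hj]
        have hu : (-1:ℝ)^(j:ℕ) * (-1:ℝ)^(j:ℕ) = 1 := by
          rw [← mul_pow]; norm_num
        show a j = (-1:ℝ)^(j:ℕ) * (c - S (j:ℕ)) +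
            (-1:ℝ)^((j+1 : Fin n):ℕ) * (c - S ((j+1 : Fin n):ℕ))
        rw [h1, hstep, Fin.cast_val_eq_self, pow_succ]
        linear_combination (-(a j)) * hu
      · have hv : (j : ℕ) = n - 1 := by have := j.isLt; omega
        have h1 : (j + 1 : Fin n) = 0 := by
          apply Fin.ext
          rw [Fin.add_def]
          simp only [Fin.val_one', Fin.val_zero]
          rw [h1n, show (j:ℕ) + 1 = n by have := j.isLt; omega, Nat.mod_self]
        have hcast : (((n - 1 : ℕ) : ℕ) : Fin n) = j := by
          apply Fin.ext
          rw [Fin.val_natCast, Nat.mod_eq_of_lt (by omega)]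
          omega
        have hlast := hstep (n - 1)
        rw [show n - 1 + 1 = n by omega, hSn, hcast, hodd.neg_one_pow] at hlast
        show a j = (-1:ℝ)^(j:ℕ) * (c - S (j:ℕ)) +
            (-1:ℝ)^((j+1 : Fin n):ℕ) * (c - S ((j+1 : Fin n):ℕ))
        rw [h1, hv, hodd.neg_one_pow]
        simp only [Fin.val_zero, pow_zero, one_mul]
        have hS0 : S 0 = 0 := by simp [hSdef]
        rw [hS0]
        linarith
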